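/- Let d ≥ 1, k = d+1, let ω ∈ 𝒢_{k,ℓ} with ℓ ≥ 2, let φ : [1,∞) → [1,∞) be non-decreasing, let L : [φ(1),∞) → [1,∞) satisfy L(x)·φ(L(x)) = x for all x ≥ φ(1), and let Λ = Aℤ^k be a unimodular lattice in ℝ^k such that every nonzero (λ,λ_k) ∈ Λ* = (A^{−1})ᵀℤ^k (with λ ∈ ℝ^d) satisfies H(λ)·|λ_k| > 1/φ(H(λ)). Let ρ ∈ (0,1/2)^d and let N ≥ φ(1) be an integer with ρ₁⋯ρ_d·N > φ(L(N)). For τ = (t₁,…,t_d,t_k) ∈ ℤ_{≥0}^k ∖ {0}, define 𝐍(τ) = (ρ₁^{−1}(2^{t₁}−1), …, ρ_d^{−1}(2^{t_d}−1), N^{−1}(2^{t_k}−1)), let 𝒰(τ) be the set of nonzero (λ,λ_k) ∈ Λ* whose i-th coordinate has absolute value between the i-th coordinate of 𝐍(τ) and the i-th coordinate of 𝐍(τ+(1,…,1)) for every i ≤ k, let Q = 2^{t₁+⋯+t_d}, let 𝐍 ∈ ℝ^d denote the first d coordinates of 𝐍(τ+(1,…,1)), and set X(τ) = ρ₁⋯ρ_d·N·Q^{−ℓ}·Σ_{(λ,λ_k)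 ∈ 𝒰(τ)} ω̂_k(N·λ_k). Then there is a constant C > 0 depending only on d and ω (and not on τ, N, ρ) such that X(τ) ≤ C·(2^{t_k}·Q)^{2−ℓ}·φ(2^d·H(𝐍))²/φ(L(N)). -/

import Mathlib

open scoped BigOperators

/-- The Fourier transform `∫ w(x) e^{-2πiξx} dx` of a real weight function. -/
noncomputable def fhat (w : ℝ → ℝ) (ξ : ℝ) : ℂ :=
  ∫ x : ℝ, (w x : ℂ) * Complex.exp (-(2 * Real.pi * Complex.I * ξ * x))

/-- The class 𝒢_{k,ℓ} of good weight tuples. -/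
def GoodWeights (k ℓ : ℕ) (w : Fin k → ℝ → ℝ) : Prop :=
  ∀ i : Fin k,
    (∀ x, 0 ≤ w i x) ∧
    (Function.support (w i) ⊆ Set.Icc (-2 : ℝ) 2) ∧
    ContDiff ℝ ℓ (w i) ∧
    (∀ ξ : ℝ, (fhat (w i) ξ).im = 0 ∧ 0 ≤ (fhat (w i) ξ).re) ∧
    0 < (fhat (w i) 0).re

/-- Multiplicative height `H(m) = ∏ max(1,|mᵢ|)`. -/
noncomputable def Hmul {d : ℕ} (m : Fin d → ℝ) : ℝ := ∏ i, max 1 |m i|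

/-- Distance from `x` to the nearest integer. -/
noncomputable def distInt (x : ℝ) : ℝ := |x - (round x : ℝ)|

/-- The constant 𝔠(ω) = ω̂₁(0)⋯ω̂_k(0). -/
noncomputable def smoothC {k : ℕ} (w : Fin k → ℝ → ℝ) : ℝ := ∏ i, (fhat (w i) 0).re

/-- Smooth discrepancy of the Kronecker sequence of α in the box (γ; ρ) at scale N. -/
noncomputable def Dbox (d : ℕ) (w : Fin (d+1) → ℝ → ℝ) (α γ ρ : Fin d → ℝ) (N : ℝ) : ℝ :=
  (∑' p : (Fin d → ℤ) × ℤ,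
      w (Fin.last d) ((p.2 : ℝ) / N) *
        ∏ i : Fin d, w i.castSucc (((p.1 i : ℝ) + (p.2 : ℝ) * α i - γ i) / ρ i))
    - smoothC w * ((∏ i, ρ i) * N)

/-- The point of the lattice `A ℤ^k` indexed by the integer vector `a`. -/
noncomputable def latPt {k : ℕ} (A : Matrix (Fin k) (Fin k) ℝ) (a : Fin k → ℤ) : Fin k → ℝ :=
  A.mulVec (fun i => (a i : ℝ))

/-- The point of the dual lattice `(A⁻¹)ᵀ ℤ^k` indexed by the integer vector `a`. -/
noncomputable def dualPt {k : ℕ} (A : Matrix (Fin k) (Fin k) ℝ) (a : Fin k → ℤ) : Fin k → ℝ :=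
  (A⁻¹).transpose.mulVec (fun i => (a i : ℝ))

/-- Smooth lattice discrepancy of the lattice `A ℤ^{d+1}` in the box (γ; ρ) at scale N. -/
noncomputable def DboxLat (d : ℕ) (A : Matrix (Fin (d+1)) (Fin (d+1)) ℝ)
    (w : Fin (d+1) → ℝ → ℝ) (γ ρ : Fin d → ℝ) (N : ℝ) : ℝ :=
  (∑' a : Fin (d+1) → ℤ,
      w (Fin.last d) (latPt A a (Fin.last d) / N) *
        ∏ i : Fin d, w i.castSucc ((latPt A a i.castSucc - γ i) / ρ i))
    - smoothC w * ((∏ i, ρ i) * N)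

/-- Side-length vector of a test box: each ρᵢ ∈ (0, 1/2). -/
def IsBox {d : ℕ} (ρ : Fin d → ℝ) : Prop := ∀ i, 0 < ρ i ∧ ρ i < 1/2

/-- Every nonzero dual lattice point (λ, λ_k) satisfies H(λ)·|λ_k| > 1/φ(H(λ)). -/
def DualBad (d : ℕ) (A : Matrix (Fin (d+1)) (Fin (d+1)) ℝ) (φ : ℝ → ℝ) : Prop :=
  ∀ a : Fin (d+1) → ℤ, dualPt A a ≠ 0 →
    Hmul (fun i : Fin d => dualPt A a i.castSucc) * |dualPt A a (Fin.last d)| >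
      1 / φ (Hmul (fun i : Fin d => dualPt A a i.castSucc))

section Aux

open MeasureTheory Function Complex

lemma fhat_eq (w : ℝ → ℝ) (ξ : ℝ) :
    fhat w ξ = FourierTransform.fourier (fun x => (w x : ℂ)) ξ := by
  rw [Real.fourier_real_eq_integral_exp_smul]
  unfold fhat
  congr 1; ext x
  rw [smul_eq_mul, mul_comm]
  congr 1; push_cast; ring

lemma norm_fourier_le (f : ℝ → ℂ) (ξ : ℝ) :
    ‖FourierTransform.fourier f ξ‖ ≤ ∫ x : ℝ, ‖f x‖ := by
  rw [Real.fourier_real_eq_integral_exp_smul]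
  refine (norm_integral_le_integral_norm _).trans_eq ?_
  congr 1; ext x
  rw [norm_smul]
  simp [Complex.norm_exp]

lemma fourier_decay (ℓ : ℕ) (w : ℝ → ℝ)
    (hsupp : Function.support w ⊆ Set.Icc (-2 : ℝ) 2)
    (hsm : ContDiff ℝ ℓ w) :
    ∃ C : ℝ, 0 < C ∧ ∀ ξ : ℝ, ‖fhat w ξ‖ * (max 1 |ξ|) ^ ℓ ≤ C := by
  set W : ℝ → ℂ := fun x => (w x : ℂ) with hW
  have hsmW : ContDiff ℝ ℓ W := Complex.ofRealCLM.contDiff.comp hsm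
  have hcsW : HasCompactSupport W := by
    apply HasCompactSupport.intro (isCompact_Icc (a := (-2:ℝ)) (b := 2))
    intro x hx
    have : w x = 0 := by
      by_contra h
      exact hx (hsupp h)
    simp [hW, this]
  have hcs : ∀ n : ℕ, HasCompactSupport (iteratedDeriv n W) := by
    intro n
    have h1 : HasCompactSupport (iteratedFDeriv ℝ n W) := hcsW.iteratedFDeriv n
    have h2 : iteratedDeriv n W =
        (fun L : ContinuousMultilinearMap ℝ (fun _ : Fin n => ℝ) ℂ => L (fun _ => 1)) ∘
          iteratedFDeriv ℝ n W := by
      funext x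
      exact iteratedDeriv_eq_iteratedFDeriv
    rw [h2]
    exact h1.comp_left (by simp)
  have hint : ∀ n : ℕ, (n : ℕ∞) ≤ (ℓ : ℕ∞) → Integrable (iteratedDeriv n W) := by
    intro n hn
    have hc : Continuous (iteratedDeriv n W) := by
      apply hsmW.continuous_iteratedDeriv n
      exact_mod_cast hn
    exact hc.integrable_of_hasCompactSupport (hcs n)
  have hkey := Real.fourier_iteratedDeriv (N := (ℓ : ℕ∞)) (n := ℓ)
    (by exact_mod_cast hsmW) hint le_rfl
  set I0 : ℝ := ∫ x : ℝ, ‖W x‖ with hI0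
  set Il : ℝ := ∫ x : ℝ, ‖iteratedDeriv ℓ W x‖ with hIl
  refine ⟨max I0 Il + 1, by positivity, fun ξ => ?_⟩
  have hb0 : ‖fhat w ξ‖ ≤ I0 := by rw [fhat_eq]; exact norm_fourier_le W ξ
  have hbl : (2 * Real.pi * |ξ|) ^ ℓ * ‖fhat w ξ‖ ≤ Il := by
    have h1 : ‖FourierTransform.fourier (iteratedDeriv ℓ W) ξ‖ ≤ Il := norm_fourier_le _ ξ
    rw [hkey] at h1
    rw [fhat_eq]
    calc (2 * Real.pi * |ξ|) ^ ℓ * ‖FourierTransform.fourier W ξ‖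
        = ‖(2 * Real.pi * Complex.I * ξ) ^ ℓ • FourierTransform.fourier W ξ‖ := by
          have hn : ‖(2 * (Real.pi : ℂ) * Complex.I * (ξ : ℂ))‖ = 2 * Real.pi * |ξ| := by
            simp [map_mul, Complex.norm_real, Complex.norm_I,
              Complex.norm_two, _root_.abs_of_nonneg Real.pi_pos.le, Real.pi_pos.le]
          rw [norm_smul, norm_pow, hn]
      _ ≤ Il := h1
  rcases le_or_gt |ξ| 1 with h | h
  · rw [max_eq_left h, one_pow, mul_one]
    calc ‖fhat w ξ‖ ≤ I0 := hb0
      _ ≤ max I0 Il + 1 := by linarith [le_max_left I0 Il]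
  · rw [max_eq_right h.le]
    have h2pi : (1:ℝ) ≤ 2 * Real.pi := by nlinarith [Real.pi_gt_three]
    have hmono : |ξ| ^ ℓ * ‖fhat w ξ‖ ≤ (2 * Real.pi * |ξ|) ^ ℓ * ‖fhat w ξ‖ := by
      apply mul_le_mul_of_nonneg_right _ (norm_nonneg _)
      apply pow_le_pow_left₀ (by positivity)
      nlinarith [abs_nonneg ξ]
    have h3 : ‖fhat w ξ‖ * |ξ| ^ ℓ ≤ Il := by rw [mul_comm]; linarith
    calc ‖fhat w ξ‖ * |ξ| ^ ℓ ≤ Il := h3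
      _ ≤ max I0 Il + 1 := by linarith [le_max_right I0 Il]

lemma tsum_le_of_sep {S : Type*} (f g : S → ℝ) (B P R : ℝ) (hP : 0 < P)
    (hB : 0 ≤ B) (hR : 0 ≤ R) (hf : ∀ a, f a ≤ B)
    (hsep : ∀ a b : S, a ≠ b → P⁻¹ < |g a - g b|) (hg : ∀ a, |g a| ≤ R) :
    ∑' a, f a ≤ (2 * (R * P) + 3) * B := by
  set K : ℤ := ⌊R * P⌋ + 1 with hK
  have hRP : 0 ≤ R * P := mul_nonneg hR hP.le
  have hKR : (K : ℝ) ≤ R * P + 1 := by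
    push_cast [hK]
    linarith [Int.floor_le (R * P)]
  have hRK : R * P ≤ (K : ℝ) := by
    push_cast [hK]
    linarith [Int.lt_floor_add_one (R * P)]
  have himg : ∀ a : S, ⌊g a * P⌋ ∈ Finset.Icc (-K) K := by
    intro a
    rw [Finset.mem_Icc]
    constructor
    · rw [Int.le_floor]
      push_cast
      have h1 : -(R * P) ≤ g a * P := by
        have := (abs_le.mp (hg a)).1
        nlinarith
      linarith
    · have h1 : g a * P ≤ R * P := by
        have := (abs_le.mp (hg a)).2
        nlinarith
      calc ⌊g a * P⌋ ≤ ⌊R * P⌋ := Int.floor_le_floor h1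
        _ ≤ K := by omega
  have hinj : Function.Injective
      (fun a : S => (⟨⌊g a * P⌋, himg a⟩ : {n : ℤ // n ∈ Finset.Icc (-K) K})) := by
    intro a b hab
    by_contra hne
    have hfl : ⌊g a * P⌋ = ⌊g b * P⌋ := congrArg Subtype.val hab
    have h1 : |g a * P - g b * P| < 1 := Int.abs_sub_lt_one_of_floor_eq_floor hfl
    have h2 : |g a - g b| * P < 1 := by
      rw [← abs_of_pos hP, ← abs_mul]
      convert h1 using 2
      exacts [rfl, rfl, by ring]
    have h3 : |g a - g b| < P⁻¹ := by
      rw [← one_div, lt_div_iff₀ hP]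
      exact h2
    exact absurd (hsep a b hne) (not_lt.mpr h3.le)
  have hfin : Finite S := Finite.of_injective _ hinj
  have hft : Fintype S := Fintype.ofFinite S
  rw [tsum_fintype]
  have hcard : (Fintype.card S : ℝ) ≤ 2 * (R * P) + 3 := by
    have h1 := Fintype.card_le_of_injective _ hinj
    have h2 : Fintype.card {n : ℤ // n ∈ Finset.Icc (-K) K} = (Finset.Icc (-K) K).card :=
      Fintype.card_coe _
    rw [h2, Int.card_Icc] at h1
    have h0 : (0:ℤ) ≤ ⌊R * P⌋ := Int.floor_nonneg.mpr hRP
    have h3 : ((K + 1 - -K).toNat : ℝ) = 2 * (K : ℝ) + 1 := by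
      exact_mod_cast congrArg (Int.cast : ℤ → ℝ)
        (show ((K + 1 - -K).toNat : ℤ) = 2 * K + 1 by omega)
    calc (Fintype.card S : ℝ) ≤ ((K + 1 - -K).toNat : ℝ) := by exact_mod_cast h1
      _ = 2 * (K : ℝ) + 1 := h3
      _ ≤ 2 * (R * P) + 3 := by linarith
  calc ∑ a : S, f a ≤ ∑ _a : S, B := Finset.sum_le_sum (fun a _ => hf a)
    _ = (Fintype.card S : ℝ) * B := by
        rw [Finset.sum_const, nsmul_eq_mul, Finset.card_univ]
    _ ≤ (2 * (R * P) + 3) * B := mul_le_mul_of_nonneg_right hcard hB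

lemma dualPt_sub {k : ℕ} (A : Matrix (Fin k) (Fin k) ℝ) (a b : Fin k → ℤ) :
    dualPt A (a - b) = dualPt A a - dualPt A b := by
  unfold dualPt
  have h : (fun i => ((a - b) i : ℝ)) = (fun i => (a i : ℝ)) - (fun i => (b i : ℝ)) := by
    funext i
    simp only [Pi.sub_apply]
    push_cast
    ring
  rw [h, Matrix.mulVec_sub]

lemma dualPt_eq_zero {k : ℕ} (A : Matrix (Fin k) (Fin k) ℝ) (hdet : |A.det| = 1)
    (a : Fin k → ℤ) (ha : dualPt A a = 0) : a = 0 := by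
  have hd : IsUnit A.det := by
    apply Ne.isUnit
    intro h
    rw [h] at hdet
    simp at hdet
  have h1 : A.transpose.mulVec (dualPt A a) = fun i => (a i : ℝ) := by
    unfold dualPt
    rw [Matrix.mulVec_mulVec, ← Matrix.transpose_mul, Matrix.nonsing_inv_mul A hd,
      Matrix.transpose_one, Matrix.one_mulVec]
  funext i
  have h2 := congrFun h1 i
  rw [ha, Matrix.mulVec_zero] at h2
  have h3 : ((a i : ℝ)) = 0 := h2.symm
  exact_mod_cast h3

end Aux

set_option maxHeartbeats 1600000 in
/-- Lemma: the bound on `X(τ)` for the dyadic regimes outside the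
uncertainty range. -/
theorem X_tau_bound
    (d ℓ : ℕ) (hd : 1 ≤ d) (hℓ : 2 ≤ ℓ)
    (w : Fin (d+1) → ℝ → ℝ) (hw : GoodWeights (d+1) ℓ w) :
    ∃ C : ℝ, 0 < C ∧
      ∀ (φ L : ℝ → ℝ) (A : Matrix (Fin (d+1)) (Fin (d+1)) ℝ)
        (ρ : Fin d → ℝ) (N : ℕ) (t : Fin d → ℕ) (tk : ℕ),
        (∀ x, 1 ≤ x → 1 ≤ φ x) →
        (∀ x y, 1 ≤ x → x ≤ y → φ x ≤ φ y) →
        (∀ x, φ 1 ≤ x → 1 ≤ L x) →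
        (∀ x, φ 1 ≤ x → L x * φ (L x) = x) →
        |A.det| = 1 →
        DualBad d A φ →
        IsBox ρ →
        φ 1 ≤ (N : ℝ) →
        φ (L N) < (∏ i, ρ i) * N →
        ¬(t = 0 ∧ tk = 0) →
        (∏ i, ρ i) * (N : ℝ) / ((2 : ℝ) ^ (∑ i, t i)) ^ ℓ *
          (∑' a : {a : Fin (d+1) → ℤ //
              dualPt A a ≠ 0 ∧
              (∀ i : Fin d,
                (ρ i)⁻¹ * ((2 : ℝ) ^ (t i) - 1) ≤ |dualPt A a i.castSucc| ∧
                |dualPt A a i.castSucc| ≤ (ρ i)⁻¹ * ((2 : ℝ) ^ (t i + 1) - 1)) ∧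
              ((N : ℝ)⁻¹ * ((2 : ℝ) ^ tk - 1) ≤ |dualPt A a (Fin.last d)| ∧
                |dualPt A a (Fin.last d)| ≤ (N : ℝ)⁻¹ * ((2 : ℝ) ^ (tk + 1) - 1))},
            (fhat (w (Fin.last d)) ((N : ℝ) * dualPt A a.1 (Fin.last d))).re)
        ≤ C * ((2 : ℝ) ^ tk * (2 : ℝ) ^ (∑ i, t i)) ^ (2 - (ℓ : ℤ)) *
            (φ (2 ^ d * Hmul (fun i : Fin d => (ρ i)⁻¹ * ((2 : ℝ) ^ (t i + 1) - 1)))) ^ 2 /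
            φ (L N) := by
  obtain ⟨C₁, hC₁pos, hC₁⟩ := fourier_decay ℓ (w (Fin.last d))
    (hw (Fin.last d)).2.1 (hw (Fin.last d)).2.2.1
  refine ⟨20 * C₁ * 2 ^ ℓ * 4 ^ d, by positivity, ?_⟩
  intro φ L A ρ N t tk hφ1 hφmono hL1 hLφ hdet hbad hbox hφ1N hρN _ht
  have hρpos : ∀ i, 0 < ρ i := fun i => (hbox i).1
  have hprodρ : 0 < ∏ i, ρ i := Finset.prod_pos (fun i _ => hρpos i)
  have hφ11 : (1:ℝ) ≤ φ 1 := hφ1 1 le_rfl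
  have hN1 : (1:ℝ) ≤ (N:ℝ) := le_trans hφ11 hφ1N
  have hNpos : (0:ℝ) < N := by linarith
  set T : ℝ := (2:ℝ) ^ tk with hTdef
  set Q : ℝ := (2:ℝ) ^ (∑ i, t i) with hQdef
  have hT1 : (1:ℝ) ≤ T := one_le_pow₀ one_le_two
  have hQ1 : (1:ℝ) ≤ Q := one_le_pow₀ one_le_two
  have hTpos : (0:ℝ) < T := by linarith
  have hQpos : (0:ℝ) < Q := by linarith
  set Ni : Fin d → ℝ := fun i => (ρ i)⁻¹ * ((2:ℝ) ^ (t i + 1) - 1) with hNidef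
  have hNi2 : ∀ i, (2:ℝ) ≤ Ni i := by
    intro i
    have h2 : (2:ℝ) * ρ i ≤ 1 := by linarith [(hbox i).2]
    have h1 : (2:ℝ) ≤ (ρ i)⁻¹ := by
      have hc := mul_inv_cancel₀ (ne_of_gt (hρpos i))
      nlinarith [hρpos i, inv_nonneg.mpr (hρpos i).le]
    have h3 : (2:ℝ) ≤ 2 ^ (t i + 1) := by
      calc (2:ℝ) = 2 ^ 1 := (pow_one 2).symm
        _ ≤ 2 ^ (t i + 1) := by
            apply pow_le_pow_right₀ one_le_two
            omega
    have h4 : (1:ℝ) ≤ (2:ℝ) ^ (t i + 1) - 1 := by linarith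
    calc (2:ℝ) = 2 * 1 := by ring
      _ ≤ (ρ i)⁻¹ * ((2:ℝ) ^ (t i + 1) - 1) := by
          apply mul_le_mul h1 h4 zero_le_one (by linarith)
  have hNipos : ∀ i, (0:ℝ) < Ni i := fun i => lt_of_lt_of_le two_pos (hNi2 i)
  set M : ℝ := 2 ^ d * Hmul Ni with hMdef
  have hMeq : M = ∏ i, (2 * Ni i) := by
    rw [hMdef]
    unfold Hmul
    rw [Finset.prod_mul_distrib, Finset.prod_const, Finset.card_univ, Fintype.card_fin]
    congr 1
    apply Finset.prod_congr rfl
    intro i _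
    rw [abs_of_pos (hNipos i), max_eq_right]
    linarith [hNi2 i]
  have hM1 : (1:ℝ) ≤ M := by
    rw [hMeq]
    calc (1:ℝ) = ∏ _i : Fin d, 1 := by simp
      _ ≤ ∏ i, (2 * Ni i) :=
          Finset.prod_le_prod (fun i _ => zero_le_one) (fun i _ => by linarith [hNi2 i])
  have hφM1 : (1:ℝ) ≤ φ M := hφ1 M hM1
  have hMpos : (0:ℝ) < M := by linarith
  have hφMpos : (0:ℝ) < φ M := by linarith
  set P : ℝ := M * φ M with hPdef
  have hPpos : 0 < P := mul_pos hMpos hφMpos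
  have hΨ1 : (1:ℝ) ≤ φ (L N) := hφ1 _ (hL1 N hφ1N)
  have hΨpos : (0:ℝ) < φ (L N) := by linarith
  -- separation of dual points in the box
  have hsep0 : ∀ c : Fin (d+1) → ℤ, dualPt A c ≠ 0 →
      (∀ i : Fin d, |dualPt A c i.castSucc| ≤ 2 * Ni i) →
      P⁻¹ < |dualPt A c (Fin.last d)| := by
    intro c hc hbd
    have hb := hbad c hc
    set H : ℝ := Hmul (fun i : Fin d => dualPt A c i.castSucc) with hHdef
    have hH1 : (1:ℝ) ≤ H := by
      rw [hHdef]
      unfold Hmul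
      calc (1:ℝ) = ∏ _i : Fin d, 1 := by simp
        _ ≤ _ := Finset.prod_le_prod (fun i _ => zero_le_one) (fun i _ => le_max_left _ _)
    have hHM : H ≤ M := by
      rw [hMeq, hHdef]
      unfold Hmul
      apply Finset.prod_le_prod
      · intro i _
        exact le_trans zero_le_one (le_max_left _ _)
      · intro i _
        apply max_le _ (hbd i)
        linarith [hNi2 i]
    have hφH1 : (1:ℝ) ≤ φ H := hφ1 H hH1
    have hφHM : φ H ≤ φ M := hφmono H M hH1 hHM
    have h2 : 1 < |dualPt A c (Fin.last d)| * (H * φ H) := by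
      have h3 := mul_lt_mul_of_pos_right hb (by linarith : (0:ℝ) < φ H)
      rw [one_div, inv_mul_cancel₀ (by linarith : φ H ≠ 0)] at h3
      nlinarith [h3]
    have hHP : H * φ H ≤ P := by
      rw [hPdef]
      apply mul_le_mul hHM hφHM (by linarith) (by linarith)
    have h4 : 1 < |dualPt A c (Fin.last d)| * P := by
      have habs : 0 ≤ |dualPt A c (Fin.last d)| := abs_nonneg _
      nlinarith
    rw [← one_div, div_lt_iff₀ hPpos]
    linarith
  by_cases hne : Nonempty {a : Fin (d+1) → ℤ //
      dualPt A a ≠ 0 ∧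
      (∀ i : Fin d,
        (ρ i)⁻¹ * ((2 : ℝ) ^ (t i) - 1) ≤ |dualPt A a i.castSucc| ∧
        |dualPt A a i.castSucc| ≤ (ρ i)⁻¹ * ((2 : ℝ) ^ (t i + 1) - 1)) ∧
      ((N : ℝ)⁻¹ * ((2 : ℝ) ^ tk - 1) ≤ |dualPt A a (Fin.last d)| ∧
        |dualPt A a (Fin.last d)| ≤ (N : ℝ)⁻¹ * ((2 : ℝ) ^ (tk + 1) - 1))}
  case neg =>
    rw [not_nonempty_iff] at hne
    rw [tsum_empty, mul_zero]
    apply div_nonneg _ (by linarith)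
    apply mul_nonneg (mul_nonneg (by positivity) (zpow_pos (by positivity) _).le) (sq_nonneg _)
  case pos =>
    obtain ⟨a₀⟩ := hne
    set R : ℝ := (N:ℝ)⁻¹ * ((2:ℝ) ^ (tk + 1) - 1) with hRdef
    have hT2T : (2:ℝ) ^ (tk + 1) = 2 * T := by rw [pow_succ]; ring
    have hRpos : 0 < R := by
      rw [hRdef, hT2T]
      apply mul_pos (inv_pos.mpr hNpos)
      linarith
    have hRle : R ≤ 2 * T / N := by
      rw [hRdef, hT2T, div_eq_inv_mul]
      apply mul_le_mul_of_nonneg_left _ (inv_nonneg.mpr hNpos.le)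
      linarith
    -- separation on the subtype
    have hsepS : ∀ a b : {a : Fin (d+1) → ℤ //
        dualPt A a ≠ 0 ∧
        (∀ i : Fin d,
          (ρ i)⁻¹ * ((2 : ℝ) ^ (t i) - 1) ≤ |dualPt A a i.castSucc| ∧
          |dualPt A a i.castSucc| ≤ (ρ i)⁻¹ * ((2 : ℝ) ^ (t i + 1) - 1)) ∧
        ((N : ℝ)⁻¹ * ((2 : ℝ) ^ tk - 1) ≤ |dualPt A a (Fin.last d)| ∧
          |dualPt A a (Fin.last d)| ≤ (N : ℝ)⁻¹ * ((2 : ℝ) ^ (tk + 1) - 1))},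
        a ≠ b → P⁻¹ < |dualPt A a.1 (Fin.last d) - dualPt A b.1 (Fin.last d)| := by
      intro a b hab
      have hc : dualPt A (a.1 - b.1) ≠ 0 := by
        intro h
        apply hab
        apply Subtype.ext
        have h1 := dualPt_eq_zero A hdet _ h
        have h2 : a.1 - b.1 = 0 := h1
        exact sub_eq_zero.mp h2
      have hbd : ∀ i : Fin d, |dualPt A (a.1 - b.1) i.castSucc| ≤ 2 * Ni i := by
        intro i
        rw [dualPt_sub, Pi.sub_apply]
        have h1 := (a.2.2.1 i).2
        have h2 := (b.2.2.1 i).2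
        calc |dualPt A a.1 i.castSucc - dualPt A b.1 i.castSucc|
            ≤ |dualPt A a.1 i.castSucc| + |dualPt A b.1 i.castSucc| := abs_sub _ _
          _ ≤ 2 * Ni i := by
              have h1' : |dualPt A a.1 i.castSucc| ≤ Ni i := h1
              have h2' : |dualPt A b.1 i.castSucc| ≤ Ni i := h2
              linarith [hNi2 i]
      have h3 := hsep0 _ hc hbd
      rw [dualPt_sub, Pi.sub_apply] at h3
      exact h3
    have hub : ∀ a : {a : Fin (d+1) → ℤ //
        dualPt A a ≠ 0 ∧
        (∀ i : Fin d,
          (ρ i)⁻¹ * ((2 : ℝ) ^ (t i) - 1) ≤ |dualPt A a i.castSucc| ∧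
          |dualPt A a i.castSucc| ≤ (ρ i)⁻¹ * ((2 : ℝ) ^ (t i + 1) - 1)) ∧
        ((N : ℝ)⁻¹ * ((2 : ℝ) ^ tk - 1) ≤ |dualPt A a (Fin.last d)| ∧
          |dualPt A a (Fin.last d)| ≤ (N : ℝ)⁻¹ * ((2 : ℝ) ^ (tk + 1) - 1))},
        |dualPt A a.1 (Fin.last d)| ≤ R := fun a => a.2.2.2.2
    have ha₀sep : P⁻¹ < |dualPt A a₀.1 (Fin.last d)| := by
      apply hsep0 _ a₀.2.1
      intro i
      have h1 : |dualPt A a₀.1 i.castSucc| ≤ Ni i := (a₀.2.2.1 i).2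
      linarith [hNi2 i]
    have hRP1 : 1 < R * P := by
      have h1 : P⁻¹ < R := lt_of_lt_of_le ha₀sep (hub a₀)
      calc (1:ℝ) = P⁻¹ * P := (inv_mul_cancel₀ (ne_of_gt hPpos)).symm
        _ < R * P := mul_lt_mul_of_pos_right h1 hPpos
    have hNle : (N:ℝ) ≤ 2 * T * P := by
      have h1 : 1 < (2 * T / N) * P :=
        lt_of_lt_of_le hRP1 (mul_le_mul_of_nonneg_right hRle hPpos.le)
      rw [div_mul_eq_mul_div, lt_div_iff₀ hNpos] at h1
      linarith
    have hΨ2T : φ (L N) ≤ 2 * T * φ M := by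
      have hLN1 : (1:ℝ) ≤ L N := hL1 N hφ1N
      have hNeq : L N * φ (L N) = N := hLφ N hφ1N
      have hLNpos : (0:ℝ) < L N := by linarith
      rcases le_or_gt (L N) M with h | h
      · calc φ (L N) ≤ φ M := hφmono (L N) M hLN1 h
          _ = 1 * φ M := (one_mul _).symm
          _ ≤ 2 * T * φ M :=
              mul_le_mul_of_nonneg_right (by linarith) hφMpos.le
      · have hkey : L N * φ (L N) ≤ L N * (2 * T * φ M) := by
          calc L N * φ (L N) = (N:ℝ) := hNeq
            _ ≤ 2 * T * P := hNle
            _ = M * (2 * T * φ M) := by rw [hPdef]; ring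
            _ ≤ L N * (2 * T * φ M) := by
                apply mul_le_mul_of_nonneg_right h.le
                have : (0:ℝ) < 2 * T * φ M := by
                  apply mul_pos _ hφMpos
                  linarith
                linarith
        exact le_of_mul_le_mul_left hkey hLNpos
    -- per-term bound
    set B : ℝ := C₁ * 2 ^ ℓ / T ^ ℓ with hBdef
    have hBpos : 0 < B := div_pos (mul_pos hC₁pos (by positivity)) (pow_pos hTpos ℓ)
    have hterm : ∀ a : {a : Fin (d+1) → ℤ //
        dualPt A a ≠ 0 ∧
        (∀ i : Fin d,
          (ρ i)⁻¹ * ((2 : ℝ) ^ (t i) - 1) ≤ |dualPt A a i.castSucc| ∧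
          |dualPt A a i.castSucc| ≤ (ρ i)⁻¹ * ((2 : ℝ) ^ (t i + 1) - 1)) ∧
        ((N : ℝ)⁻¹ * ((2 : ℝ) ^ tk - 1) ≤ |dualPt A a (Fin.last d)| ∧
          |dualPt A a (Fin.last d)| ≤ (N : ℝ)⁻¹ * ((2 : ℝ) ^ (tk + 1) - 1))},
        (fhat (w (Fin.last d)) ((N : ℝ) * dualPt A a.1 (Fin.last d))).re ≤ B := by
      intro a
      set ξ : ℝ := (N:ℝ) * dualPt A a.1 (Fin.last d) with hξ
      have h1 : (fhat (w (Fin.last d)) ξ).re ≤ ‖fhat (w (Fin.last d)) ξ‖ := by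
        exact Complex.re_le_norm _
      have h2 : T / 2 ≤ max 1 |ξ| := by
        rcases Nat.eq_zero_or_pos tk with h | h
        · have hT1' : T = 1 := by rw [hTdef, h, pow_zero]
          rw [hT1']
          calc (1:ℝ)/2 ≤ 1 := by norm_num
            _ ≤ max 1 |ξ| := le_max_left _ _
        · have hT2' : (2:ℝ) ≤ T := by
            rw [hTdef]
            calc (2:ℝ) = 2 ^ 1 := (pow_one 2).symm
              _ ≤ 2 ^ tk := pow_le_pow_right₀ one_le_two h
          have h4 := a.2.2.2.1
          have h3 : T - 1 ≤ |ξ| := by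
            rw [hξ, abs_mul, abs_of_pos hNpos]
            calc T - 1 = (N:ℝ) * ((N:ℝ)⁻¹ * (T - 1)) := by field_simp
              _ ≤ (N:ℝ) * |dualPt A a.1 (Fin.last d)| :=
                  mul_le_mul_of_nonneg_left h4 hNpos.le
          calc T/2 ≤ T - 1 := by linarith
            _ ≤ |ξ| := h3
            _ ≤ max 1 |ξ| := le_max_right _ _
      have h5 := hC₁ ξ
      have h6 : ‖fhat (w (Fin.last d)) ξ‖ * (T/2) ^ ℓ ≤ C₁ := by
        calc ‖fhat (w (Fin.last d)) ξ‖ * (T/2) ^ ℓ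
            ≤ ‖fhat (w (Fin.last d)) ξ‖ * (max 1 |ξ|) ^ ℓ := by
              apply mul_le_mul_of_nonneg_left _ (norm_nonneg _)
              apply pow_le_pow_left₀ (by linarith) h2
          _ ≤ C₁ := h5
      have h7 : ‖fhat (w (Fin.last d)) ξ‖ ≤ B := by
        rw [hBdef, le_div_iff₀ (pow_pos hTpos ℓ)]
        rw [div_pow] at h6
        have h8 := mul_le_mul_of_nonneg_right h6 (by positivity : (0:ℝ) ≤ 2 ^ ℓ)
        calc ‖fhat (w (Fin.last d)) ξ‖ * T ^ ℓ
            = ‖fhat (w (Fin.last d)) ξ‖ * (T ^ ℓ / 2 ^ ℓ) * 2 ^ ℓ := by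
              field_simp
          _ ≤ C₁ * 2 ^ ℓ := h8
      linarith
    -- sum bound
    have hsum := tsum_le_of_sep (S := {a : Fin (d+1) → ℤ //
        dualPt A a ≠ 0 ∧
        (∀ i : Fin d,
          (ρ i)⁻¹ * ((2 : ℝ) ^ (t i) - 1) ≤ |dualPt A a i.castSucc| ∧
          |dualPt A a i.castSucc| ≤ (ρ i)⁻¹ * ((2 : ℝ) ^ (t i + 1) - 1)) ∧
        ((N : ℝ)⁻¹ * ((2 : ℝ) ^ tk - 1) ≤ |dualPt A a (Fin.last d)| ∧
          |dualPt A a (Fin.last d)| ≤ (N : ℝ)⁻¹ * ((2 : ℝ) ^ (tk + 1) - 1))})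
      (fun a => (fhat (w (Fin.last d)) ((N : ℝ) * dualPt A a.1 (Fin.last d))).re)
      (fun a => dualPt A a.1 (Fin.last d)) B P R hPpos hBpos.le hRpos.le hterm hsepS hub
    have hsum2 : (∑' a : {a : Fin (d+1) → ℤ //
        dualPt A a ≠ 0 ∧
        (∀ i : Fin d,
          (ρ i)⁻¹ * ((2 : ℝ) ^ (t i) - 1) ≤ |dualPt A a i.castSucc| ∧
          |dualPt A a i.castSucc| ≤ (ρ i)⁻¹ * ((2 : ℝ) ^ (t i + 1) - 1)) ∧
        ((N : ℝ)⁻¹ * ((2 : ℝ) ^ tk - 1) ≤ |dualPt A a (Fin.last d)| ∧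
          |dualPt A a (Fin.last d)| ≤ (N : ℝ)⁻¹ * ((2 : ℝ) ^ (tk + 1) - 1))},
        (fhat (w (Fin.last d)) ((N : ℝ) * dualPt A a.1 (Fin.last d))).re)
        ≤ 5 * (R * P) * B := by
      refine le_trans hsum (mul_le_mul_of_nonneg_right ?_ hBpos.le)
      linarith
    -- product bound
    have hPM : (∏ i, ρ i) * M ≤ 4 ^ d * Q := by
      rw [hMeq, ← Finset.prod_mul_distrib]
      have hfac : ∀ i, ρ i * (2 * Ni i) = 2 * ((2:ℝ) ^ (t i + 1) - 1) := by
        intro i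
        show ρ i * (2 * ((ρ i)⁻¹ * ((2:ℝ) ^ (t i + 1) - 1))) = 2 * ((2:ℝ) ^ (t i + 1) - 1)
        rw [show ρ i * (2 * ((ρ i)⁻¹ * ((2:ℝ) ^ (t i + 1) - 1)))
            = (ρ i * (ρ i)⁻¹) * (2 * ((2:ℝ) ^ (t i + 1) - 1)) from by ring,
          mul_inv_cancel₀ (ne_of_gt (hρpos i)), one_mul]
      calc ∏ i, (ρ i * (2 * Ni i)) ≤ ∏ i, (2:ℝ) ^ (t i + 2) := by
            apply Finset.prod_le_prod
            · intro i _
              rw [hfac i]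
              have := hNi2 i
              have h9 : (1:ℝ) ≤ (2:ℝ) ^ (t i + 1) - 1 := by
                have : (2:ℝ) ≤ 2 ^ (t i + 1) := by
                  calc (2:ℝ) = 2 ^ 1 := (pow_one 2).symm
                    _ ≤ 2 ^ (t i + 1) := by
                        apply pow_le_pow_right₀ one_le_two
                        omega
                linarith
              linarith
            · intro i _
              rw [hfac i]
              have h10 : (2:ℝ) ^ (t i + 2) = 2 * 2 ^ (t i + 1) := by
                rw [pow_succ]
                ring
              linarith [h10]
        _ = 4 ^ d * Q := by
            rw [Finset.prod_pow_eq_pow_sum]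
            have hsum3 : ∑ i, (t i + 2) = (∑ i, t i) + 2 * d := by
              rw [Finset.sum_add_distrib, Finset.sum_const, Finset.card_univ, Fintype.card_fin,
                smul_eq_mul]
              omega
            rw [hsum3, pow_add, hQdef, show (4:ℝ) = 2 ^ 2 by norm_num, ← pow_mul]
            exact mul_comm _ _
    -- zpow rewrite
    have hTQpos : (0:ℝ) < T * Q := mul_pos hTpos hQpos
    have hzp : (T * Q) ^ ((2:ℤ) - (ℓ:ℤ)) = (T * Q) ^ (2:ℕ) / (T * Q) ^ ℓ := by
      rw [zpow_sub₀ (ne_of_gt hTQpos)]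
      norm_cast
    have hNne : (N:ℝ) ≠ 0 := ne_of_gt hNpos
    have hQℓpos : (0:ℝ) < Q ^ ℓ := pow_pos hQpos ℓ
    have hTℓpos : (0:ℝ) < T ^ ℓ := pow_pos hTpos ℓ
    have hpre : (0:ℝ) ≤ (∏ i, ρ i) * (N:ℝ) / Q ^ ℓ :=
      div_nonneg (mul_nonneg hprodρ.le hNpos.le) hQℓpos.le
    have h10C : (0:ℝ) ≤ 10 * C₁ * 2 ^ ℓ :=
      mul_nonneg (mul_nonneg (by norm_num) hC₁pos.le) (by positivity)
    have h20C : (0:ℝ) ≤ 20 * C₁ * 2 ^ ℓ * 4 ^ d :=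
      mul_nonneg (mul_nonneg (mul_nonneg (by norm_num) hC₁pos.le) (by positivity)) (by positivity)
    have hφMstep : φ M ≤ 2 * T * (φ M) ^ 2 / φ (L N) := by
      rw [le_div_iff₀ hΨpos]
      calc φ M * φ (L N) ≤ φ M * (2 * T * φ M) := mul_le_mul_of_nonneg_left hΨ2T hφMpos.le
        _ = 2 * T * (φ M) ^ 2 := by ring
    calc (∏ i, ρ i) * (N:ℝ) / Q ^ ℓ *
          (∑' a : {a : Fin (d+1) → ℤ //
            dualPt A a ≠ 0 ∧
            (∀ i : Fin d,
              (ρ i)⁻¹ * ((2 : ℝ) ^ (t i) - 1) ≤ |dualPt A a i.castSucc| ∧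
              |dualPt A a i.castSucc| ≤ (ρ i)⁻¹ * ((2 : ℝ) ^ (t i + 1) - 1)) ∧
            ((N : ℝ)⁻¹ * ((2 : ℝ) ^ tk - 1) ≤ |dualPt A a (Fin.last d)| ∧
              |dualPt A a (Fin.last d)| ≤ (N : ℝ)⁻¹ * ((2 : ℝ) ^ (tk + 1) - 1))},
            (fhat (w (Fin.last d)) ((N : ℝ) * dualPt A a.1 (Fin.last d))).re)
        ≤ (∏ i, ρ i) * (N:ℝ) / Q ^ ℓ * (5 * (R * P) * B) :=
          mul_le_mul_of_nonneg_left hsum2 hpre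
      _ ≤ (∏ i, ρ i) * (N:ℝ) / Q ^ ℓ * (5 * ((2 * T / N) * P) * B) := by
          apply mul_le_mul_of_nonneg_left _ hpre
          have h11 : R * P ≤ (2 * T / N) * P := mul_le_mul_of_nonneg_right hRle hPpos.le
          apply mul_le_mul_of_nonneg_right _ hBpos.le
          linarith
      _ = 10 * C₁ * 2 ^ ℓ * (((∏ i, ρ i) * M) * (T * φ M)) / (Q ^ ℓ * T ^ ℓ) := by
          rw [hBdef, hPdef]
          field_simp
          ring
      _ ≤ 10 * C₁ * 2 ^ ℓ * ((4 ^ d * Q) * (T * φ M)) / (Q ^ ℓ * T ^ ℓ) := by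
          apply (div_le_div_iff_of_pos_right (mul_pos hQℓpos hTℓpos)).mpr
          apply mul_le_mul_of_nonneg_left _ h10C
          exact mul_le_mul_of_nonneg_right hPM (mul_nonneg hTpos.le hφMpos.le)
      _ ≤ 10 * C₁ * 2 ^ ℓ * ((4 ^ d * Q) * (T * (2 * T * (φ M) ^ 2 / φ (L N)))) /
            (Q ^ ℓ * T ^ ℓ) := by
          apply (div_le_div_iff_of_pos_right (mul_pos hQℓpos hTℓpos)).mpr
          apply mul_le_mul_of_nonneg_left _ h10C
          apply mul_le_mul_of_nonneg_left _ (mul_nonneg (by positivity) hQpos.le)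
          exact mul_le_mul_of_nonneg_left hφMstep hTpos.le
      _ = 20 * C₁ * 2 ^ ℓ * 4 ^ d * ((T ^ 2 * Q) / (T ^ ℓ * Q ^ ℓ)) * (φ M) ^ 2 / φ (L N) := by
          field_simp
          ring
      _ ≤ 20 * C₁ * 2 ^ ℓ * 4 ^ d * ((T ^ 2 * Q ^ 2) / (T ^ ℓ * Q ^ ℓ)) * (φ M) ^ 2 /
            φ (L N) := by
          apply (div_le_div_iff_of_pos_right hΨpos).mpr
          apply mul_le_mul_of_nonneg_right _ (sq_nonneg (φ M))
          apply mul_le_mul_of_nonneg_left _ h20C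
          apply (div_le_div_iff_of_pos_right (mul_pos hTℓpos hQℓpos)).mpr
          have hQQ : Q ≤ Q ^ 2 := by nlinarith [hQ1]
          exact mul_le_mul_of_nonneg_left hQQ (pow_nonneg hTpos.le 2)
      _ = 20 * C₁ * 2 ^ ℓ * 4 ^ d * ((T * Q) ^ (2:ℕ) / (T * Q) ^ ℓ) * (φ M) ^ 2 / φ (L N) := by
          rw [mul_pow, mul_pow]
      _ = 20 * C₁ * 2 ^ ℓ * 4 ^ d * ((T * Q) ^ ((2:ℤ) - (ℓ:ℤ))) * (φ M) ^ 2 / φ (L N) := by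
          rw [hzp]
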